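/- Let k ≥ 1 and ρ ≥ 1 be natural numbers and let p', q' : Fin (k·ρ) → ℝ be positive vectors. Define the block-aggregated vectors p, q : Fin k → ℝ by p_r = Σ_{i=0}^{ρ-1} p'_{rρ+i} and q_r = Σ_{i=0}^{ρ-1} q'_{rρ+i}. Then the Chernoff information satisfies C(p‖q) ≤ C(p'‖q'), i.e. −log(inf_{λ∈(0,1)} Σ_r p_r^{1-λ} q_r^{λ}) ≤ −log(inf_{λ∈(0,1)} Σ_j p'_j^{1-λ} q'_j^{λ}); equivalently inf_{λ∈(0,1)} Σ_r p_r^{1-λ} q_r^{λ} ≥ inf_{λ∈(0,1)} Σ_j p'_j^{1-λ} q'_j^{λ}. -/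

import Mathlib

open Real Finset

lemma holder_two {ι : Type*} [Fintype ι] [Nonempty ι] (a b : ι → ℝ)
    (ha : ∀ i, 0 < a i) (hb : ∀ i, 0 < b i) {l : ℝ} (hl : l ∈ Set.Ioo (0:ℝ) 1) :
    ∑ i, a i ^ (1 - l) * b i ^ l ≤ (∑ i, a i) ^ (1 - l) * (∑ i, b i) ^ l := by
  obtain ⟨hl0, hl1⟩ := hl
  have hA : 0 < ∑ i, a i := Finset.sum_pos (fun i _ => ha i) Finset.univ_nonempty
  have hB : 0 < ∑ i, b i := Finset.sum_pos (fun i _ => hb i) Finset.univ_nonempty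
  set A := ∑ i, a i with hAdef
  set B := ∑ i, b i with hBdef
  have hA' : A ^ (1 - l) ≠ 0 := (Real.rpow_pos_of_pos hA _).ne'
  have hB' : B ^ l ≠ 0 := (Real.rpow_pos_of_pos hB _).ne'
  have key : ∑ i, (a i / A) ^ (1 - l) * (b i / B) ^ l ≤ 1 := by
    calc ∑ i, (a i / A) ^ (1 - l) * (b i / B) ^ l
        ≤ ∑ i, ((1 - l) * (a i / A) + l * (b i / B)) := by
          refine Finset.sum_le_sum fun i _ => ?_
          exact Real.geom_mean_le_arith_mean2_weighted (by linarith) hl0.le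
            (div_nonneg (ha i).le hA.le) (div_nonneg (hb i).le hB.le) (by ring)
      _ = 1 := by
          rw [Finset.sum_add_distrib, ← Finset.mul_sum, ← Finset.mul_sum,
            ← Finset.sum_div, ← Finset.sum_div, ← hAdef, ← hBdef]
          field_simp
          ring
  have expand : ∀ i, a i ^ (1-l) * b i ^ l
      = (A ^ (1-l) * B ^ l) * ((a i / A) ^ (1-l) * (b i / B) ^ l) := by
    intro i
    rw [Real.div_rpow (ha i).le hA.le, Real.div_rpow (hb i).le hB.le]
    field_simp
  calc ∑ i, a i ^ (1-l) * b i ^ l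
      = (A ^ (1-l) * B ^ l) * ∑ i, (a i / A) ^ (1-l) * (b i / B) ^ l := by
        rw [Finset.mul_sum]; exact Finset.sum_congr rfl fun i _ => expand i
    _ ≤ (A ^ (1-l) * B ^ l) * 1 := by
        apply mul_le_mul_of_nonneg_left key
        positivity
    _ = A ^ (1-l) * B ^ l := mul_one _

/-- The index `r*ρ + i` of the `i`-th fine quantizer cell inside the `r`-th coarse
block, as an element of `Fin (k * ρ)`. -/
def blockIdx {k ρ : ℕ} (r : Fin k) (i : Fin ρ) : Fin (k * ρ) :=
  ⟨r.val * ρ + i.val, by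
    have h1 : r.val * ρ + i.val < (r.val + 1) * ρ := by
      rw [Nat.succ_mul]; exact Nat.add_lt_add_left i.isLt _
    exact lt_of_lt_of_le h1 (Nat.mul_le_mul_right ρ r.isLt)⟩

lemma sum_block {k ρ : ℕ} (f : Fin (k * ρ) → ℝ) :
    ∑ j, f j = ∑ r : Fin k, ∑ i : Fin ρ, f (blockIdx r i) := by
  have h := Fintype.sum_equiv finProdFinEquiv
    (fun x : Fin k × Fin ρ => f (blockIdx x.1 x.2)) f
    (fun x => by
      have hx : blockIdx x.1 x.2 = finProdFinEquiv x := by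
        apply Fin.ext
        simp [blockIdx, finProdFinEquiv, Fin.ext_iff]
        ring
      simp [hx])
  rw [← h, Fintype.sum_prod_type]

/-- The Chernoff information `C(p‖q) = -log (inf_{λ ∈ (0,1)} ∑ i, p i^{1-λ} q i^λ)`
between two positive vectors on a finite index type. -/
noncomputable def chernoffInfo {ι : Type*} [Fintype ι] (p q : ι → ℝ) : ℝ :=
  -Real.log (sInf ((fun l : ℝ => ∑ i, p i ^ (1 - l) * q i ^ l) '' Set.Ioo (0 : ℝ) 1))

/-- Merging `ρ` consecutive quantizer cells cannot increase the Chernoff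
information: `C(p‖q) ≤ C(p'‖q')`, equivalently the infimum over `λ ∈ (0,1)` of
the Chernoff-type sum for the coarse vectors is at least that for the fine
vectors. -/
theorem block_aggregation_chernoffInfo_le
    (k ρ : ℕ) (hk : 1 ≤ k) (hρ : 1 ≤ ρ)
    (p' q' : Fin (k * ρ) → ℝ)
    (hp' : ∀ j, 0 < p' j) (hq' : ∀ j, 0 < q' j)
    (p q : Fin k → ℝ)
    (hp : ∀ r, p r = ∑ i : Fin ρ, p' (blockIdx r i))
    (hq : ∀ r, q r = ∑ i : Fin ρ, q' (blockIdx r i)) :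
    chernoffInfo p q ≤ chernoffInfo p' q' ∧
    sInf ((fun l : ℝ => ∑ r, p r ^ (1 - l) * q r ^ l) '' Set.Ioo (0 : ℝ) 1)
      ≥ sInf ((fun l : ℝ => ∑ j, p' j ^ (1 - l) * q' j ^ l) '' Set.Ioo (0 : ℝ) 1) := by
  have hρne : Nonempty (Fin ρ) := ⟨⟨0, hρ⟩⟩
  have hkρ : Nonempty (Fin (k * ρ)) := ⟨⟨0, Nat.mul_pos hk hρ⟩⟩
  -- pointwise inequality
  have pointwise : ∀ l ∈ Set.Ioo (0:ℝ) 1,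
      ∑ j, p' j ^ (1 - l) * q' j ^ l ≤ ∑ r, p r ^ (1 - l) * q r ^ l := by
    intro l hl
    rw [sum_block (fun j => p' j ^ (1 - l) * q' j ^ l)]
    refine Finset.sum_le_sum fun r _ => ?_
    rw [hp r, hq r]
    exact holder_two (fun i => p' (blockIdx r i)) (fun i => q' (blockIdx r i))
      (fun i => hp' _) (fun i => hq' _) hl
  -- lower bound for the fine sums
  set c : ℝ := ∑ j, min (p' j) (q' j) with hc
  have hcpos : 0 < c :=
    Finset.sum_pos (fun j _ => lt_min (hp' j) (hq' j)) Finset.univ_nonempty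
  have hlb : ∀ x ∈ ((fun l : ℝ => ∑ j, p' j ^ (1 - l) * q' j ^ l) '' Set.Ioo (0:ℝ) 1),
      c ≤ x := by
    rintro x ⟨l, hl, rfl⟩
    refine Finset.sum_le_sum fun j _ => ?_
    have hm : 0 < min (p' j) (q' j) := lt_min (hp' j) (hq' j)
    have : min (p' j) (q' j) = min (p' j) (q' j) ^ (1 - l) * min (p' j) (q' j) ^ l := by
      rw [← Real.rpow_add hm]
      norm_num
    rw [this]
    exact mul_le_mul (Real.rpow_le_rpow hm.le (min_le_left _ _) (by linarith [hl.2]))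
      (Real.rpow_le_rpow hm.le (min_le_right _ _) hl.1.le)
      (Real.rpow_nonneg hm.le _) (Real.rpow_nonneg (hp' j).le _)
  have hbdd : BddBelow ((fun l : ℝ => ∑ j, p' j ^ (1 - l) * q' j ^ l) '' Set.Ioo (0:ℝ) 1) :=
    ⟨c, hlb⟩
  have hhalf : (1/2 : ℝ) ∈ Set.Ioo (0:ℝ) 1 := by norm_num
  have hne' : ((fun l : ℝ => ∑ j, p' j ^ (1 - l) * q' j ^ l) '' Set.Ioo (0:ℝ) 1).Nonempty :=
    ⟨_, ⟨1/2, hhalf, rfl⟩⟩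
  have hne : ((fun l : ℝ => ∑ r, p r ^ (1 - l) * q r ^ l) '' Set.Ioo (0:ℝ) 1).Nonempty :=
    ⟨_, ⟨1/2, hhalf, rfl⟩⟩
  have h2 : sInf ((fun l : ℝ => ∑ j, p' j ^ (1 - l) * q' j ^ l) '' Set.Ioo (0:ℝ) 1)
      ≤ sInf ((fun l : ℝ => ∑ r, p r ^ (1 - l) * q r ^ l) '' Set.Ioo (0:ℝ) 1) := by
    refine le_csInf hne ?_
    rintro b ⟨l, hl, rfl⟩
    exact le_trans (csInf_le hbdd ⟨l, hl, rfl⟩) (pointwise l hl)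
  have hfinepos : 0 < sInf ((fun l : ℝ => ∑ j, p' j ^ (1 - l) * q' j ^ l) '' Set.Ioo (0:ℝ) 1) :=
    lt_of_lt_of_le hcpos (le_csInf hne' hlb)
  refine ⟨?_, h2⟩
  unfold chernoffInfo
  exact neg_le_neg (Real.log_le_log hfinepos h2)
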